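/- Let C > 0, k = C/2, v = (5/3)·C, p_1 = 2/3, p_2 = 1/3, m = 5, and let the CASH distribution be q_1 = 9/16, q_2 = q_3 = q_4 = 1/8, q_5 = 1/16. Then: (a) k·Σ_{t=1}^{5} t·q_t = C, so the server's amortized authentication cost (with α = 1) meets the budget C_max = C exactly; (b) letting π_1 ≥ π_2 ≥ … ≥ π_{10} be the non-increasing arrangement of the ten products p_i·q_j and U(B) = v·Σ_{i=1}^B π_i − k·Σ_{i=1}^B i·π_i − k·B·Σ_{i=B+1}^{10} π_i, the threshold B = 2 maximizes utility, i.e., U(2) ≥ U(B) for all B ∈ {0,…,10}; and (c) the corresponding cracked fraction is Σ_{i=1}^{2} π_i = (p_1 + p_2)·q_1 = 9/16 < 1. -/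

import Mathlib

/-- The paper's non-uniform CASH example: with `k = C/2`, `v = (5/3)·C`,
passwords of probabilities `p 1 = 2/3`, `p 2 = 1/3`, `m = 5` salt values with
CASH distribution `q 1 = 9/16`, `q 2 = q 3 = q 4 = 1/8`, `q 5 = 1/16`:
(a) the amortized server cost `k·∑_{t=1}^5 t·q t` equals `C`;
(b) for `π` the non-increasing arrangement (indexed `1,…,10`) of the ten products
`p i·q j` and `U B = v·∑_{i=1}^B π i − k·∑_{i=1}^B i·π i − k·B·∑_{i=B+1}^{10} π i`,
the threshold `B = 2` maximizes utility; and
(c) the cracked fraction is `π 1 + π 2 = (p 1 + p 2)·q 1 = 9/16 < 1`. -/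
def cashEquiv : Fin 10 ≃ Fin 2 × Fin 5 where
  toFun := ![(0,0),(1,0),(0,1),(0,2),(0,3),(1,1),(1,2),(1,3),(0,4),(1,4)]
  invFun := fun x => ![![0,2,3,4,8],![1,5,6,7,9]] x.1 x.2
  left_inv := by decide
  right_inv := by decide


theorem example_nonuniform_cash (C : ℝ) (hC : 0 < C)
    (k v : ℝ) (hk : k = C / 2) (hv : v = (5 / 3) * C)
    (p : ℕ → ℝ) (hp1 : p 1 = 2 / 3) (hp2 : p 2 = 1 / 3)
    (q : ℕ → ℝ) (hq1 : q 1 = 9 / 16) (hq2 : q 2 = 1 / 8) (hq3 : q 3 = 1 / 8)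
    (hq4 : q 4 = 1 / 8) (hq5 : q 5 = 1 / 16)
    (π : ℕ → ℝ)
    (hπmono : ∀ i i' : ℕ, 1 ≤ i → i ≤ i' → i' ≤ 10 → π i' ≤ π i)
    (hπperm : ∃ σ : Fin 10 ≃ Fin 2 × Fin 5,
      ∀ j : Fin 10, π ((j : ℕ) + 1) = p ((σ j).1 + 1) * q ((σ j).2 + 1))
    (U : ℕ → ℝ)
    (hU : ∀ B : ℕ, U B =
      v * ∑ i ∈ Finset.Icc 1 B, π i
        - k * ∑ i ∈ Finset.Icc 1 B, (i : ℝ) * π i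
        - k * (B : ℝ) * ∑ i ∈ Finset.Icc (B + 1) 10, π i) :
    k * ∑ t ∈ Finset.Icc (1 : ℕ) 5, (t : ℝ) * q t = C ∧
      (∀ B : ℕ, B ≤ 10 → U B ≤ U 2) ∧
      π 1 + π 2 = (p 1 + p 2) * q 1 ∧
      (p 1 + p 2) * q 1 = 9 / 16 ∧ (9 : ℝ) / 16 < 1 := by
  -- identify the sorted arrangement π explicitly
  have hList : [π 1, π 2, π 3, π 4, π 5, π 6, π 7, π 8, π 9, π 10]
      = [3/8, 3/16, 1/12, 1/12, 1/12, 1/24, 1/24, 1/24, 1/24, 1/48] := by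
    obtain ⟨σ, hσ⟩ := hπperm
    set h : Fin 10 → ℝ := fun j => p ((cashEquiv j).1 + 1) * q ((cashEquiv j).2 + 1) with hh
    set τ : Equiv.Perm (Fin 10) := σ.trans cashEquiv.symm with hτ
    have hfh : (fun j : Fin 10 => π ((j : ℕ) + 1)) = h ∘ τ := by
      funext j
      simp only [hh, hτ, Function.comp, Equiv.trans_apply, Equiv.apply_symm_apply]
      exact hσ j
    have hperm : List.Perm (List.ofFn (fun j : Fin 10 => π ((j : ℕ) + 1))) (List.ofFn h) := by
      rw [hfh]; exact τ.ofFn_comp_perm h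
    have hL1 : List.ofFn (fun j : Fin 10 => π ((j : ℕ) + 1))
        = [π 1, π 2, π 3, π 4, π 5, π 6, π 7, π 8, π 9, π 10] := by
      simp [List.ofFn_succ]
    have hL2 : List.ofFn h
        = [3/8, 3/16, 1/12, 1/12, 1/12, 1/24, 1/24, 1/24, 1/24, 1/48] := by
      simp only [hh, cashEquiv, List.ofFn_succ, List.ofFn_zero, Equiv.coe_fn_mk,
        Matrix.cons_val', Matrix.cons_val_zero, Matrix.cons_val_one, Matrix.head_cons,
        Matrix.cons_val_fin_one, Matrix.empty_val', Matrix.cons_val, Matrix.cons_val_succ]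
      norm_num [show ((0:Fin 5):ℕ) = 0 from rfl, show ((1:Fin 5):ℕ) = 1 from rfl,
        show ((2:Fin 5):ℕ) = 2 from rfl, show ((3:Fin 5):ℕ) = 3 from rfl,
        show ((4:Fin 5):ℕ) = 4 from rfl, show ((0:Fin 2):ℕ) = 0 from rfl,
        show ((1:Fin 2):ℕ) = 1 from rfl, hp1, hp2, hq1, hq2, hq3, hq4, hq5]
    rw [hL1, hL2] at hperm
    haveI : IsAntisymm ℝ (· ≥ ·) := ⟨fun a b h1 h2 => le_antisymm h2 h1⟩
    haveI : IsTrans ℝ (· ≥ ·) := ⟨fun a b c h1 h2 => le_trans h2 h1⟩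
    have hs1 : List.Pairwise (· ≥ ·) [π 1, π 2, π 3, π 4, π 5, π 6, π 7, π 8, π 9, π 10] := by
      rw [← List.isChain_iff_pairwise]
      simp only [List.isChain_cons_cons, List.isChain_singleton, and_true, ge_iff_le]
      refine ⟨?_, ?_, ?_, ?_, ?_, ?_, ?_, ?_, ?_⟩ <;>
        exact hπmono _ _ (by norm_num) (by norm_num) (by norm_num)
    have hs2 : List.Pairwise (· ≥ ·)
        ([3/8, 3/16, 1/12, 1/12, 1/12, 1/24, 1/24, 1/24, 1/24, 1/48] : List ℝ) := by
      rw [← List.isChain_iff_pairwise]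
      norm_num [List.isChain_cons_cons]
    exact hperm.eq_of_pairwise (fun a b _ _ h1 h2 => le_antisymm h2 h1) hs1 hs2
  simp only [List.cons.injEq, and_true] at hList
  obtain ⟨h1, h2, h3, h4, h5, h6, h7, h8, h9, h10⟩ := hList
  refine ⟨?_, ?_, ?_, ?_, by norm_num⟩
  · norm_num [Finset.sum_Icc_succ_top, hq1, hq2, hq3, hq4, hq5, hk]
    try ring
  · intro B hB
    interval_cases B <;>
      [skip; skip; exact le_rfl; skip; skip; skip; skip; skip; skip; skip; skip] <;>
      · rw [hU, hU]
        norm_num [Finset.sum_Icc_succ_top, h1,h2,h3,h4,h5,h6,h7,h8,h9,h10, hk, hv]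
        try linarith
  · rw [h1, h2, hp1, hp2, hq1]; norm_num
  · rw [hp1, hp2, hq1]; norm_num
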